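/- Main theorem (necessity direction in abstract form): Let (Ω, P) carry a jointly measurable family (L_x)_{x>0} of nonnegative random variables, all with the same non-trivial distribution, and let f : (0,∞) → [0,∞) be measurable. Suppose a random variable I satisfies I = ∫_0^∞ f(x) L_x dx a.s. If P(I < ∞) = 1, then ∫_0^∞ f(x) dx < ∞. -/

import Mathlib

open MeasureTheory ProbabilityTheory ENNReal

/-- Abstract necessity direction of the main theorem: if `(L x)_{x>0}` is a jointly
measurable family of nonnegative, identically distributed, non-trivial random
variables, and `I = ∫_0^∞ f(x) L x dx` a.s. with `P(I < ∞) = 1`, then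
`∫_0^∞ f(x) dx < ∞`. -/
theorem necessity_abstract {Ω : Type*} [MeasurableSpace Ω]
    (P : Measure Ω) [IsProbabilityMeasure P]
    (L : ℝ → Ω → ℝ≥0∞) (hLmeas : Measurable (Function.uncurry L))
    (hLid : ∀ x > (0 : ℝ), P.map (L x) = P.map (L 1))
    (hLnontriv : ¬ (∀ᵐ ω ∂P, L 1 ω = 0))
    (f : ℝ → ℝ) (hf : Measurable f) (hf0 : ∀ x, 0 ≤ f x)
    (I : Ω → ℝ≥0∞) (hImeas : Measurable I)
    (hI : ∀ᵐ ω ∂P, I ω = ∫⁻ x in Set.Ioi (0 : ℝ), ENNReal.ofReal (f x) * L x ω)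
    (hfin : P {ω | I ω < ∞} = 1) :
    (∫⁻ x in Set.Ioi (0 : ℝ), ENNReal.ofReal (f x)) < ∞ := by
  -- measurability of each `L x`
  have hLx : ∀ x : ℝ, Measurable (L x) := fun x =>
    hLmeas.comp (measurable_const.prodMk measurable_id)
  -- find a level c with positive probability for L 1
  have hpos : P {ω | L 1 ω ≠ 0} ≠ 0 := by
    intro h
    exact hLnontriv (by simpa [Filter.eventuallyEq_iff_exists_mem] using
      (ae_iff.2 (by simpa using h) : ∀ᵐ ω ∂P, L 1 ω = 0))
  obtain ⟨m, hm⟩ : ∃ m : ℕ, P {ω | (m : ℝ≥0∞)⁻¹ < L 1 ω} ≠ 0 := by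
    by_contra h
    push_neg at h
    apply hpos
    have hsub : {ω | L 1 ω ≠ 0} ⊆ ⋃ n : ℕ, {ω | (n : ℝ≥0∞)⁻¹ < L 1 ω} := by
      intro ω hω
      obtain ⟨n, hn⟩ := ENNReal.exists_inv_nat_lt hω
      exact Set.mem_iUnion.2 ⟨n, hn⟩
    refine le_antisymm ?_ zero_le
    calc P {ω | L 1 ω ≠ 0} ≤ P (⋃ n : ℕ, {ω | (n : ℝ≥0∞)⁻¹ < L 1 ω}) := measure_mono hsub
      _ = 0 := by
        refine measure_iUnion_null fun n => h n
  set c : ℝ≥0∞ := (m : ℝ≥0∞)⁻¹ with hc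
  set δ : ℝ≥0∞ := P {ω | c < L 1 ω} with hδ
  have hδ0 : δ ≠ 0 := hm
  have hδtop : δ ≠ ∞ := (measure_lt_top P _).ne
  have hc0 : c ≠ 0 := by simp [hc]
  -- the set {c < L x} has probability δ for each x > 0
  have hSx : ∀ x > (0 : ℝ), P {ω | c < L x ω} = δ := by
    intro x hx
    have h1 : P {ω | c < L x ω} = (P.map (L x)) (Set.Ioi c) := by
      rw [Measure.map_apply (hLx x) measurableSet_Ioi]; rfl
    have h2 : δ = (P.map (L 1)) (Set.Ioi c) := by
      rw [Measure.map_apply (hLx 1) measurableSet_Ioi]; rfl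
    rw [h1, hLid x hx, ← h2]
  -- P {I = ∞} = 0
  have hItop : P {ω | I ω = ∞} = 0 := by
    have hms : MeasurableSet {ω | I ω < ∞} := hImeas measurableSet_Iio
    have : P {ω | I ω < ∞}ᶜ = 0 := by
      rw [measure_compl hms (measure_lt_top P _).ne, hfin]
      simp [measure_univ]
    convert this using 2
    ext ω; simp [lt_top_iff_ne_top]
  -- choose M = n with P {n < I} < δ/2
  have htend : Filter.Tendsto (fun n : ℕ => P {ω | (n : ℝ≥0∞) < I ω}) Filter.atTop
      (nhds (P (⋂ n : ℕ, {ω | (n : ℝ≥0∞) < I ω}))) := by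
    refine tendsto_measure_iInter_atTop
      (fun n => (hImeas measurableSet_Ioi).nullMeasurableSet) ?_ ⟨0, (measure_lt_top P _).ne⟩
    intro i j hij ω hω
    exact lt_of_le_of_lt (Nat.cast_le.mpr hij : (i : ℝ≥0∞) ≤ j) hω
  have hInter : (⋂ n : ℕ, {ω | (n : ℝ≥0∞) < I ω}) = {ω | I ω = ∞} := by
    ext ω
    simp only [Set.mem_iInter, Set.mem_setOf_eq]
    constructor
    · intro h
      by_contra htop
      obtain ⟨n, hn⟩ := ENNReal.exists_nat_gt htop
      exact absurd (h n) (not_lt.2 hn.le)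
    · intro h n; rw [h]; exact ENNReal.natCast_lt_top n
  rw [hInter, hItop] at htend
  have hδ2pos : (0 : ℝ≥0∞) < δ / 2 := ENNReal.div_pos hδ0 (by norm_num)
  obtain ⟨n, hn⟩ : ∃ n : ℕ, P {ω | (n : ℝ≥0∞) < I ω} ≤ δ / 2 :=
    ((ENNReal.tendsto_nhds_zero.mp htend) (δ / 2) hδ2pos).exists
  -- the good event A
  set A : Set Ω := {ω | I ω ≤ (n : ℝ≥0∞)} with hA
  have hAmeas : MeasurableSet A := hImeas measurableSet_Iic
  have hAc : Aᶜ = {ω | (n : ℝ≥0∞) < I ω} := by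
    ext ω; simp [hA, not_le]
  -- key: for x > 0, c * (δ/2) ≤ ∫⁻ ω in A, L x ω ∂P
  have hkey : ∀ x > (0 : ℝ), c * (δ / 2) ≤ ∫⁻ ω in A, L x ω ∂P := by
    intro x hx
    set S : Set Ω := {ω | c < L x ω} with hS
    have hSmeas : MeasurableSet S := hLx x measurableSet_Ioi
    have hPS : δ / 2 ≤ P (S ∩ A) := by
      have h1 : P S ≤ P (S ∩ A) + P (S \ A) := measure_le_inter_add_diff P S A
      have h2 : P (S \ A) ≤ P Aᶜ := measure_mono fun ω hω => hω.2
      have h3 : P Aᶜ ≤ δ / 2 := by rw [hAc]; exact hn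
      have h4 : δ ≤ P (S ∩ A) + δ / 2 := by
        calc δ = P S := (hSx x hx).symm
          _ ≤ P (S ∩ A) + P (S \ A) := h1
          _ ≤ P (S ∩ A) + δ / 2 := add_le_add le_rfl (h2.trans h3)
      have := tsub_le_iff_right.2 h4
      rwa [ENNReal.sub_half hδtop] at this
    calc c * (δ / 2) ≤ c * P (S ∩ A) := by gcongr
      _ = c * (P.restrict A) S := by rw [Measure.restrict_apply hSmeas]
      _ = ∫⁻ ω in S, c ∂(P.restrict A) := by rw [setLIntegral_const, mul_comm]
      _ = ∫⁻ ω, S.indicator (fun _ => c) ω ∂(P.restrict A) := by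
          rw [lintegral_indicator hSmeas]
      _ ≤ ∫⁻ ω in A, L x ω ∂P := by
          refine lintegral_mono fun ω => ?_
          by_cases hω : ω ∈ S
          · simpa [Set.indicator_of_mem hω] using (le_of_lt hω)
          · simp [Set.indicator_of_notMem hω]
  -- swap integrals
  have hg : Measurable (Function.uncurry fun (ω : Ω) (x : ℝ) =>
      ENNReal.ofReal (f x) * L x ω) := by
    have : Measurable fun p : Ω × ℝ => ENNReal.ofReal (f p.2) * L p.2 p.1 := by
      exact ((measurable_ofReal.comp (hf.comp measurable_snd))).mul
        (hLmeas.comp measurable_swap)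
    exact this
  have hswap : ∫⁻ ω in A, I ω ∂P
      = ∫⁻ x in Set.Ioi (0 : ℝ), ENNReal.ofReal (f x) * ∫⁻ ω in A, L x ω ∂P := by
    have hIa : ∀ᵐ ω ∂(P.restrict A), I ω
        = ∫⁻ x in Set.Ioi (0 : ℝ), ENNReal.ofReal (f x) * L x ω := ae_restrict_of_ae hI
    rw [lintegral_congr_ae hIa]
    rw [lintegral_lintegral_swap hg.aemeasurable]
    refine lintegral_congr fun x => ?_
    rw [lintegral_const_mul _ (hLx x)]
  -- the bound on the integral over A
  have hbound : ∫⁻ ω in A, I ω ∂P ≤ (n : ℝ≥0∞) := by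
    calc ∫⁻ ω in A, I ω ∂P ≤ ∫⁻ _ in A, (n : ℝ≥0∞) ∂P := by
          refine lintegral_mono_ae ?_
          filter_upwards [ae_restrict_mem hAmeas] with ω hω
          exact hω
      _ = (n : ℝ≥0∞) * P A := by rw [setLIntegral_const]
      _ ≤ (n : ℝ≥0∞) * 1 := by gcongr; exact prob_le_one
      _ = (n : ℝ≥0∞) := mul_one _
  -- put it together
  set T : ℝ≥0∞ := ∫⁻ x in Set.Ioi (0 : ℝ), ENNReal.ofReal (f x) with hT
  have hmain : T * (c * (δ / 2)) ≤ (n : ℝ≥0∞) := by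
    calc T * (c * (δ / 2))
        = ∫⁻ x in Set.Ioi (0 : ℝ), ENNReal.ofReal (f x) * (c * (δ / 2)) := by
          rw [hT, lintegral_mul_const _ hf.ennreal_ofReal]
      _ ≤ ∫⁻ x in Set.Ioi (0 : ℝ), ENNReal.ofReal (f x) * ∫⁻ ω in A, L x ω ∂P := by
          refine lintegral_mono_ae ?_
          filter_upwards [ae_restrict_mem measurableSet_Ioi] with x hx
          exact mul_le_mul_right (hkey x hx) _
      _ = ∫⁻ ω in A, I ω ∂P := hswap.symm
      _ ≤ (n : ℝ≥0∞) := hbound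
  have hk0 : c * (δ / 2) ≠ 0 := by
    simp only [ne_eq, mul_eq_zero, not_or]
    exact ⟨hc0, hδ2pos.ne'⟩
  by_contra hTtop
  push_neg at hTtop
  rw [top_le_iff] at hTtop
  rw [hTtop, ENNReal.top_mul hk0] at hmain
  exact absurd hmain (by simp [ENNReal.natCast_lt_top n |>.ne])
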